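/- arXiv:2206.05467 — 3 statements merged into one kernel-verified Lean document; each statement's English description precedes it below -/
import Mathlib

section
/- Let d ≥ 2, let G_0 be a subgroup of Σ_d (the d-adic integers) with the property that whenever (0, i_1, i_2, ...) ∈ G_0 (i.e. an element whose first digit is 0, obtained by prepending 0 to the sequence (i_n)), also (i_1, i_2, ...) ∈ G_0, i.e. G_0 is invariant under the shift restricted to elements with first digit 0. If d is prime, G_0 is closed, and G_0 ≠ {0}, then G_0 = Σ_d. -/
/-- `i_1 + i_2 d + ⋯ + i_n d^(n-1)` for a digit sequence `i` (digits indexed from 0). -/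
def dVal (d : ℕ) (i : ℕ → Fin d) (n : ℕ) : ℕ :=
  ∑ m ∈ Finset.range n, (i m : ℕ) * d ^ m

lemma dVal_lt {d : ℕ} (hd : 1 ≤ d) (i : ℕ → Fin d) (n : ℕ) : dVal d i n < d ^ n := by
  induction n with
  | zero => simp [dVal]
  | succ n ih =>
    rw [dVal, Finset.sum_range_succ, ← dVal]
    have h1 : (i n : ℕ) * d ^ n ≤ (d - 1) * d ^ n :=
      Nat.mul_le_mul_right _ (by have := (i n).isLt; omega)
    have h2 : d ^ (n + 1) = (d - 1) * d ^ n + d ^ n := by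
      rw [pow_succ, mul_comm, ← Nat.succ_mul, Nat.succ_eq_add_one, Nat.sub_add_cancel hd]
    omega

lemma dVal_succ_zero {d : ℕ} (i : ℕ → Fin d) (n : ℕ) :
    dVal d i (n + 1) = (i 0 : ℕ) + d * dVal d (fun m => i (m + 1)) n := by
  rw [dVal, Finset.sum_range_succ', dVal, Finset.mul_sum]
  simp only [pow_zero, mul_one, pow_succ]
  rw [add_comm]
  congr 1
  exact Finset.sum_congr rfl (fun m _ => by ring)

lemma dVal_inj {d : ℕ} (i j : ℕ → Fin d) (n : ℕ)
    (h : dVal d i n = dVal d j n) : ∀ m < n, i m = j m := by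
  induction n generalizing i j with
  | zero => omega
  | succ n ih =>
    rw [dVal_succ_zero, dVal_succ_zero] at h
    have hi := (i 0).isLt
    have hj := (j 0).isLt
    have h0 : (i 0 : ℕ) = (j 0 : ℕ) := by
      have := congrArg (· % d) h
      simpa [Nat.add_mul_mod_self_left, Nat.mod_eq_of_lt hi, Nat.mod_eq_of_lt hj] using this
    have hd0 : 0 < d := by omega
    have hrest : dVal d (fun m => i (m+1)) n = dVal d (fun m => j (m+1)) n := by
      have : d * dVal d (fun m => i (m+1)) n = d * dVal d (fun m => j (m+1)) n := by omega
      exact Nat.eq_of_mul_eq_mul_left hd0 this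
    intro m hm
    cases m with
    | zero => exact Fin.ext h0
    | succ m => exact ih _ _ hrest m (by omega)

/-- `k`-fold sum of `y` with respect to the operation `add` and neutral element `zero`. -/
def iterAdd {d : ℕ} (add : (ℕ → Fin d) → (ℕ → Fin d) → (ℕ → Fin d))
    (zero : ℕ → Fin d) : ℕ → (ℕ → Fin d) → (ℕ → Fin d)
  | 0, _ => zero
  | k + 1, y => add y (iterAdd add zero k y)

/-- Let `d` be prime and let `G₀` be a subgroup of the group `Σ_d`
of `d`-adic integers (with respect to the addition-with-carry `add`, characterised by
the congruences `hadd`), which is invariant under the shift restricted to elements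
whose first digit is `0`. If `G₀` is closed and `G₀ ≠ {0}`, then `G₀ = Σ_d`. -/
theorem stmt_2 (d : ℕ) (hd : 2 ≤ d) (hprime : Nat.Prime d)
    (add : (ℕ → Fin d) → (ℕ → Fin d) → (ℕ → Fin d))
    (hadd : ∀ i j n, dVal d (add i j) n ≡ dVal d i n + dVal d j n [MOD d ^ n])
    (G0 : Set (ℕ → Fin d))
    (hzero : (fun _ => (⟨0, by omega⟩ : Fin d)) ∈ G0)
    (hclosedAdd : ∀ i ∈ G0, ∀ j ∈ G0, add i j ∈ G0)
    (hneg : ∀ i ∈ G0, ∃ j ∈ G0, add i j = fun _ => (⟨0, by omega⟩ : Fin d))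
    (hshift : ∀ i ∈ G0, i 0 = (⟨0, by omega⟩ : Fin d) → (fun n => i (n + 1)) ∈ G0)
    (hclosed : IsClosed G0)
    (hnontriv : G0 ≠ {fun _ => (⟨0, by omega⟩ : Fin d)}) :
    G0 = Set.univ := by
  set zero : ℕ → Fin d := fun _ => (⟨0, by omega⟩ : Fin d) with hzero_def
  have hd1 : 1 ≤ d := by omega
  -- dVal of zero is 0
  have hdValzero : ∀ n, dVal d zero n = 0 := by
    intro n; simp [dVal, hzero_def]
  -- iterAdd stays in G0
  have hiterMem : ∀ (k : ℕ) (y : _), y ∈ G0 → iterAdd add zero k y ∈ G0 := by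
    intro k y hy
    induction k with
    | zero => exact hzero
    | succ k ih => exact hclosedAdd y hy _ ih
  -- dVal of iterAdd
  have hiterVal : ∀ (k n : ℕ) (y : _),
      dVal d (iterAdd add zero k y) n ≡ k * dVal d y n [MOD d ^ n] := by
    intro k n y
    induction k with
    | zero => simpa [iterAdd, hdValzero] using Nat.ModEq.refl 0
    | succ k ih =>
      calc dVal d (add y (iterAdd add zero k y)) n
          ≡ dVal d y n + dVal d (iterAdd add zero k y) n [MOD d ^ n] := hadd _ _ n
        _ ≡ dVal d y n + k * dVal d y n [MOD d ^ n] := Nat.ModEq.add_left _ ih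
        _ = (k + 1) * dVal d y n := by ring
  -- there is an element of G0 with nonzero first digit
  obtain ⟨x, hxG, hxne⟩ : ∃ x ∈ G0, x ≠ zero := by
    by_contra h
    push_neg at h
    apply hnontriv
    apply Set.eq_singleton_iff_unique_mem.mpr
    exact ⟨hzero, fun x hx => h x hx⟩
  have hex : ∃ k, x k ≠ (⟨0, by omega⟩ : Fin d) := by
    by_contra h
    push_neg at h
    exact hxne (funext h)
  classical
  let k := Nat.find hex
  have hk : x k ≠ (⟨0, by omega⟩ : Fin d) := Nat.find_spec hex
  have hkmin : ∀ l < k, x l = (⟨0, by omega⟩ : Fin d) := by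
    intro l hl
    by_contra h
    exact absurd (Nat.find_min hex hl) (by simp [h])
  have hshiftiter : ∀ j ≤ k, (fun n => x (n + j)) ∈ G0 := by
    intro j
    induction j with
    | zero => intro _; simpa using hxG
    | succ j ih =>
      intro hj
      have hmem := ih (by omega)
      have h0 : (fun n => x (n + j)) 0 = (⟨0, by omega⟩ : Fin d) := by
        show x (0 + j) = _
        rw [Nat.zero_add]
        exact hkmin j (by omega)
      have := hshift _ hmem h0
      convert this using 1
      funext n
      congr 1
      omega
  set y : ℕ → Fin d := fun n => x (n + k) with hy_def
  have hyG : y ∈ G0 := hshiftiter k le_rfl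
  have hy0 : (y 0 : ℕ) ≠ 0 := by
    intro h
    apply hk
    have : y 0 = (⟨0, by omega⟩ : Fin d) := Fin.ext h
    simpa [hy_def] using this
  -- For each n, every value t < d^n is attained by dVal of an element of G0
  have hsurj : ∀ n : ℕ, ∀ t < d ^ (n + 1), ∃ z ∈ G0, dVal d z (n + 1) = t := by
    intro n t ht
    set a := dVal d y (n + 1) with ha_def
    have hamod : a % d = (y 0 : ℕ) := by
      rw [ha_def, dVal_succ_zero]
      simp [Nat.add_mul_mod_self_left, Nat.mod_eq_of_lt (y 0).isLt]
    have hnd : ¬ d ∣ a := by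
      intro h
      rw [Nat.dvd_iff_mod_eq_zero] at h
      exact hy0 (hamod ▸ h)
    have hcop : Nat.Coprime a (d ^ (n + 1)) :=
      Nat.Coprime.pow_right _ ((hprime.coprime_iff_not_dvd.mpr hnd).symm)
    have hpos : 0 < d ^ (n + 1) := pow_pos (by omega) _
    have htot : 0 < (d ^ (n + 1)).totient := Nat.totient_pos.mpr hpos
    have heuler : a ^ (d ^ (n + 1)).totient ≡ 1 [MOD d ^ (n + 1)] :=
      Nat.ModEq.pow_totient hcop
    set m := t * a ^ ((d ^ (n + 1)).totient - 1) with hm_def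
    have hma : m * a ≡ t [MOD d ^ (n + 1)] := by
      have : m * a = t * a ^ (d ^ (n + 1)).totient := by
        rw [hm_def, mul_assoc, ← pow_succ, Nat.sub_add_cancel htot]
      rw [this]
      calc t * a ^ (d ^ (n + 1)).totient ≡ t * 1 [MOD d ^ (n + 1)] :=
            Nat.ModEq.mul_left _ heuler
        _ = t := by ring
    refine ⟨iterAdd add zero m y, hiterMem m y hyG, ?_⟩
    have h1 : dVal d (iterAdd add zero m y) (n + 1) ≡ t [MOD d ^ (n + 1)] :=
      (hiterVal m (n + 1) y).trans hma
    have h2 := dVal_lt hd1 (iterAdd add zero m y) (n + 1)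
    have := h1.eq_of_lt_of_lt h2 ht
    exact this
  -- density: every point is a limit of points of G0
  apply Set.eq_univ_of_forall
  intro w
  have hz : ∀ n : ℕ, ∃ z ∈ G0, ∀ m ≤ n, z m = w m := by
    intro n
    obtain ⟨z, hzG, hzv⟩ := hsurj n (dVal d w (n + 1)) (dVal_lt hd1 w (n + 1))
    exact ⟨z, hzG, fun m hm => dVal_inj z w (n + 1) hzv m (by omega)⟩
  choose z hzG hzv using hz
  have htend : Filter.Tendsto z Filter.atTop (nhds w) := by
    rw [tendsto_pi_nhds]
    intro m
    apply Filter.Tendsto.congr' (f₁ := fun _ => w m)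
    · filter_upwards [Filter.eventually_ge_atTop m] with n hn
      exact (hzv n m hn).symm
    · exact tendsto_const_nhds
  exact hclosed.mem_of_tendsto htend (Filter.Eventually.of_forall hzG)
end

section
/- Under the transversality setup: if there exists a C^α function φ : ℝ/ℤ → ℂ and a constant c with f = λ^{-1}·φ∘T − φ + c, then h_i = φ̂ − φ̂(0) for every i ∈ Σ_d (where φ̂ is the lift of φ); in particular h_i does not depend on i. -/
/-- Iterated inverse branches `τ_{i,n} = τ_{i_n} ∘ ⋯ ∘ τ_{i_1}`, `τ_j(x) = τ(x+j)`. -/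
def tauIt (tau : ℝ → ℝ) (i : ℕ → ℕ) : ℕ → ℝ → ℝ
  | 0 => id
  | n + 1 => fun x => tau (tauIt tau i n x + i n)

/-- `h_i(x) = Σ_{n≥1} λⁿ (f̂(τ_{i,n}(x)) − f̂(τ_{i,n}(0)))`. -/
noncomputable def hFun (tau : ℝ → ℝ) (fhat : ℝ → ℂ) (lam : ℂ) (i : ℕ → ℕ) (x : ℝ) : ℂ :=
  ∑' n : ℕ, lam ^ (n + 1) *
    (fhat (tauIt tau i (n + 1) x) - fhat (tauIt tau i (n + 1) 0))

section aux
variable {d : ℕ} {That : ℝ → ℝ}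

lemma shiftA (hTdeg : ∀ x, That (x + 1) = That x + d) :
    ∀ (j : ℕ) (x : ℝ), That (x + j) = That x + d * j := by
  intro j
  induction j with
  | zero => simp
  | succ j ih =>
    intro x
    have h : (x + ((j : ℝ) + 1)) = (x + j) + 1 := by ring
    push_cast
    rw [h, hTdeg, ih]
    ring

lemma shiftB (hTdeg : ∀ x, That (x + 1) = That x + d) :
    ∀ (k j : ℕ) (x : ℝ), That^[k] (x + j) = That^[k] x + (d : ℝ)^k * j := by
  intro k
  induction k with
  | zero => simp
  | succ k ih =>
    intro j x
    rw [Function.iterate_succ_apply, Function.iterate_succ_apply, shiftA hTdeg j x]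
    have : That x + (d : ℝ) * j = That x + ((d * j : ℕ) : ℝ) := by push_cast; ring
    rw [this, ih]
    push_cast
    ring

lemma orbitShift {tau : ℝ → ℝ} (htau1 : ∀ x, That (tau x) = x)
    (hTdeg : ∀ x, That (x + 1) = That x + d) (i : ℕ → ℕ) (n : ℕ) :
    ∀ k : ℕ, ∃ K : ℕ, ∀ x : ℝ, That^[k] (tauIt tau i (n + k) x) = tauIt tau i n x + K := by
  intro k
  induction k with
  | zero => exact ⟨0, fun x => by simp⟩
  | succ k ih =>
    obtain ⟨K, hK⟩ := ih
    refine ⟨K + d^k * i (n + k), fun x => ?_⟩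
    have h1 : tauIt tau i (n + (k+1)) x = tau (tauIt tau i (n+k) x + i (n+k)) := rfl
    rw [h1, Function.iterate_succ_apply, htau1, shiftB hTdeg, hK]
    push_cast
    ring

lemma iterDeriv (hTC1 : ContDiff ℝ 1 That) (hTexp : ∀ x, 1 < deriv That x) :
    ∀ k, Differentiable ℝ (That^[k]) ∧ ∀ x, 1 ≤ deriv (That^[k]) x := by
  have hdT : Differentiable ℝ That := hTC1.differentiable one_ne_zero
  intro k
  induction k with
  | zero => refine ⟨differentiable_id, fun x => ?_⟩; simp
  | succ k ih =>
    refine ⟨?_, ?_⟩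
    · rw [Function.iterate_succ']
      exact hdT.comp ih.1
    · intro x
      have h : deriv (That^[k+1]) x = deriv That (That^[k] x) * deriv (That^[k]) x := by
        rw [Function.iterate_succ']
        exact deriv_comp x (hdT.differentiableAt) (ih.1.differentiableAt)
      rw [h]
      nlinarith [ih.2 x, (hTexp (That^[k] x)).le]

lemma mvt_lower {f : ℝ → ℝ} (hf : Differentiable ℝ f) {C : ℝ} (hC : 0 ≤ C)
    (hd : ∀ x, C ≤ deriv f x) (a b : ℝ) : C * |a - b| ≤ |f a - f b| := by
  wlog hab : b ≤ a generalizing a b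
  · rw [abs_sub_comm a b, abs_sub_comm (f a)]
    exact this b a (le_of_not_ge hab)
  have key : C * (a - b) ≤ f a - f b := mul_sub_le_image_sub_of_le_deriv hf hd hab
  have h0 : 0 ≤ f a - f b := le_trans (mul_nonneg hC (sub_nonneg.2 hab)) key
  rw [abs_of_nonneg (sub_nonneg.2 hab), abs_of_nonneg h0]
  exact key

end aux

/-- In the transversality setup: if there is a `C^α` function
`φ` on the circle (with 1-periodic `α`-Hölder lift `φ̂`) and a constant `c` such that
`f = λ⁻¹ φ∘T − φ + c`, then `h_i = φ̂ − φ̂(0)` for every `i ∈ Σ_d`; in particular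
`h_i` does not depend on `i`. -/
theorem stmt_8 (d : ℕ) (hd : 2 ≤ d)
    (That : ℝ → ℝ) (hTC1 : ContDiff ℝ 1 That) (hT0 : That 0 = 0)
    (hTdeg : ∀ x, That (x + 1) = That x + d)
    (hTexp : ∀ x, 1 < deriv That x)
    (tau : ℝ → ℝ) (htau1 : ∀ x, That (tau x) = x) (htau2 : ∀ x, tau (That x) = x)
    (α : NNReal) (hα : 0 < α) (hα1 : α ≤ 1)
    (fhat : ℝ → ℂ) (hfper : Function.Periodic fhat 1)
    (C : NNReal) (hfH : HolderWith C α fhat)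
    (lam : ℂ) (hlam0 : 0 < ‖lam‖)
    (hlam : ‖lam‖ <
      (⨆ n : ℕ, sInf (Set.range fun x => |deriv (That^[n + 1]) x|) ^ (((n : ℝ) + 1)⁻¹))
        ^ (α : ℝ))
    (phihat : ℝ → ℂ) (hphiper : Function.Periodic phihat 1)
    (Cphi : NNReal) (hphiH : HolderWith Cphi α phihat)
    (c : ℂ) (hcoh : ∀ x, fhat x = lam⁻¹ * phihat (That x) - phihat x + c) :
    ∀ i : ℕ → Fin d,
      hFun tau fhat lam (fun m => (i m : ℕ)) = fun x => phihat x - phihat 0 := by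
  intro i
  funext x
  set j : ℕ → ℕ := fun m => (i m : ℕ) with hj
  set L : ℝ := ‖lam‖ with hL
  have hαR : (0:ℝ) < (α:ℝ) := hα
  have hαne : (α:ℝ) ≠ 0 := ne_of_gt hαR
  have hder := iterDeriv hTC1 hTexp
  set θf : ℕ → ℝ := fun k => sInf (Set.range fun y => |deriv (That^[k]) y|) with hθf
  have hθ1 : ∀ k, 1 ≤ θf k := by
    intro k
    refine le_csInf (Set.range_nonempty _) ?_
    rintro y ⟨z, rfl⟩
    exact le_trans ((hder k).2 z) (le_abs_self _)
  have hθ_le : ∀ k y, θf k ≤ deriv (That^[k]) y := by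
    intro k y
    have h1 : θf k ≤ |deriv (That^[k]) y| :=
      csInf_le ⟨0, by rintro w ⟨z, rfl⟩; exact abs_nonneg _⟩ ⟨y, rfl⟩
    rwa [abs_of_nonneg (le_trans zero_le_one ((hder k).2 y))] at h1
  -- extract m with L < θf m ^ (α/m)
  have hext : ∃ m : ℕ, 0 < m ∧ L < θf m ^ ((α:ℝ)/(m:ℝ)) := by
    set cseq : ℕ → ℝ := fun n => θf (n+1) ^ (((n:ℝ)+1)⁻¹) with hcseq
    have hlam' : L < (⨆ n : ℕ, cseq n) ^ (α:ℝ) := hlam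
    by_cases hbdd : BddAbove (Set.range cseq)
    · have hSnn : (0:ℝ) ≤ ⨆ n, cseq n := by
        refine le_trans ?_ (le_ciSup hbdd 0)
        exact Real.rpow_nonneg (le_trans zero_le_one (hθ1 1)) _
      have h2 : L ^ ((α:ℝ)⁻¹) < ⨆ n, cseq n := by
        have h3 := Real.rpow_lt_rpow (le_of_lt hlam0) hlam' (inv_pos.2 hαR)
        rwa [Real.rpow_rpow_inv hSnn hαne] at h3
      obtain ⟨n0, hn0⟩ := (lt_ciSup_iff hbdd).1 h2
      refine ⟨n0 + 1, Nat.succ_pos _, ?_⟩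
      have h4 := Real.rpow_lt_rpow (Real.rpow_nonneg (le_of_lt hlam0) _) hn0 hαR
      rw [Real.rpow_inv_rpow (le_of_lt hlam0) hαne] at h4
      have h5 : (cseq n0) ^ (α:ℝ) = θf (n0+1) ^ ((α:ℝ)/((n0:ℝ)+1)) := by
        rw [hcseq, ← Real.rpow_mul (le_trans zero_le_one (hθ1 (n0+1)))]
        ring_nf
      rw [h5] at h4
      convert h4 using 3
      push_cast
      ring
    · exfalso
      rw [Real.iSup_of_not_bddAbove hbdd, Real.zero_rpow hαne] at hlam'
      exact absurd (lt_trans hlam0 hlam') (lt_irrefl 0)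
  obtain ⟨m, hm0, hkey⟩ := hext
  set θ : ℝ := θf m with hθ
  have hθ1' : 1 ≤ θ := hθ1 m
  have hθpos : (0:ℝ) < θ := lt_of_lt_of_le zero_lt_one hθ1'
  set s : ℝ := θ ^ (-(α:ℝ)/(m:ℝ)) with hs
  have hspos : 0 < s := Real.rpow_pos_of_pos hθpos _
  set ρ : ℝ := L * s with hρ
  have hρ0 : 0 ≤ ρ := mul_nonneg (le_of_lt hlam0) (le_of_lt hspos)
  have hρ1 : ρ < 1 := by
    have h1 : s = (θ ^ ((α:ℝ)/(m:ℝ)))⁻¹ := by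
      rw [hs, ← Real.rpow_neg (le_of_lt hθpos)]
      ring_nf
    rw [hρ, h1, ← div_eq_mul_inv, div_lt_one (Real.rpow_pos_of_pos hθpos _)]
    exact hkey
  -- orbit
  set u : ℕ → ℝ := fun n => tauIt tau j n x with hu
  set v : ℕ → ℝ := fun n => tauIt tau j n 0 with hv
  have hu0 : u 0 = x := rfl
  have hv0 : v 0 = 0 := rfl
  have hTu : ∀ n, That (u (n+1)) = u n + j n := fun n => htau1 _
  have hTv : ∀ n, That (v (n+1)) = v n + j n := fun n => htau1 _
  have hstep1 : ∀ n, |u (n+1) - v (n+1)| ≤ |u n - v n| := by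
    intro n
    have h1 := mvt_lower (hTC1.differentiable one_ne_zero) zero_le_one
      (fun y => (hTexp y).le) (u (n+1)) (v (n+1))
    rw [one_mul, hTu n, hTv n] at h1
    simpa using h1
  have hstepm : ∀ n, θ * |u (n+m) - v (n+m)| ≤ |u n - v n| := by
    intro n
    obtain ⟨K, hK⟩ := orbitShift htau1 hTdeg j n m
    have h1 := mvt_lower (hder m).1 (le_of_lt hθpos) (hθ_le m) (u (n+m)) (v (n+m))
    rw [hu, hv] at h1 ⊢
    rw [hK x, hK 0] at h1
    simpa using h1
  have hmono : ∀ n, |u n - v n| ≤ |x| := by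
    intro n
    induction n with
    | zero => simp [hu0, hv0]
    | succ n ih => exact le_trans (hstep1 n) ih
  have hF4 : ∀ n, θ ^ (n / m) * |u n - v n| ≤ |x| := by
    intro n
    induction n using Nat.strong_induction_on with
    | _ n ih =>
      by_cases hnm : n < m
      · rw [Nat.div_eq_of_lt hnm, pow_zero, one_mul]
        exact hmono n
      · push_neg at hnm
        set k := n - m with hk
        have hnk : n = k + m := by omega
        have hdiv : n / m = k / m + 1 := by
          rw [hnk, Nat.add_div_right _ hm0]
        rw [hdiv, pow_succ, hnk]
        calc θ ^ (k/m) * θ * |u (k+m) - v (k+m)|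
            = θ ^ (k/m) * (θ * |u (k+m) - v (k+m)|) := by ring
          _ ≤ θ ^ (k/m) * |u k - v k| := by
              exact mul_le_mul_of_nonneg_left (hstepm k) (pow_nonneg (le_of_lt hθpos) _)
          _ ≤ |x| := ih k (by omega)
  have hDb : ∀ n, |u n - v n| ≤ θ⁻¹ ^ (n/m) * |x| := by
    intro n
    have h1 := hF4 n
    rw [inv_pow]
    have h2 : (0:ℝ) < θ ^ (n/m) := pow_pos hθpos _
    calc |u n - v n| = (θ ^ (n/m))⁻¹ * (θ ^ (n/m) * |u n - v n|) := by
          field_simp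
      _ ≤ (θ ^ (n/m))⁻¹ * |x| := by
          exact mul_le_mul_of_nonneg_left h1 (inv_nonneg.2 h2.le)
  -- rpow estimate on powers
  have hpow : ∀ n : ℕ, ((θ⁻¹ ^ (n/m) : ℝ)) ^ (α:ℝ) ≤ θ ^ (α:ℝ) * s ^ n := by
    intro n
    have hθinv : (θ⁻¹ : ℝ) = θ ^ (-1 : ℝ) := by rw [Real.rpow_neg_one]
    have h1 : ((θ⁻¹ ^ (n/m) : ℝ)) ^ (α:ℝ) = θ ^ (-(((n/m : ℕ)):ℝ) * (α:ℝ)) := by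
      rw [hθinv, ← Real.rpow_natCast (θ ^ (-1:ℝ)) (n/m), ← Real.rpow_mul (le_of_lt hθpos),
        ← Real.rpow_mul (le_of_lt hθpos)]
      ring_nf
    have h2 : s ^ n = θ ^ ((-(α:ℝ)/(m:ℝ)) * n) := by
      rw [hs, ← Real.rpow_natCast (θ ^ (-(α:ℝ)/(m:ℝ))) n, ← Real.rpow_mul (le_of_lt hθpos)]
    have h3 : θ ^ (α:ℝ) * s ^ n = θ ^ ((α:ℝ) + (-(α:ℝ)/(m:ℝ)) * n) := by
      rw [h2, ← Real.rpow_add hθpos]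
    rw [h1, h3]
    apply Real.rpow_le_rpow_of_exponent_le hθ1'
    -- need: -(n/m) * α ≤ α + (-α/m) * n, i.e. α(1 - n/m + ⌊n/m⌋) ≥ 0, since n ≤ m*(n/m) + m
    have h4 : (n:ℝ) ≤ (m:ℝ) * ((n/m : ℕ):ℝ) + (m:ℝ) := by
      have h6 := Nat.div_add_mod n m
      have h7 := Nat.mod_lt n hm0
      have h8 : n ≤ m * (n / m) + m := by omega
      exact_mod_cast h8
    have hmpos : (0:ℝ) < (m:ℝ) := by exact_mod_cast hm0
    rw [div_mul_eq_mul_div, ← sub_nonneg]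
    have h5 : (α:ℝ) + -(α:ℝ) * (n:ℝ) / (m:ℝ) - -(((n/m:ℕ)):ℝ) * (α:ℝ)
        = (α:ℝ) * (((m:ℝ) * ((n/m:ℕ):ℝ) + (m:ℝ)) - (n:ℝ)) / (m:ℝ) := by
      field_simp
      ring
    rw [h5]
    apply div_nonneg _ (le_of_lt hmpos)
    apply mul_nonneg (le_of_lt hαR)
    linarith
  -- Hölder bound on orbit differences
  have habs : ∀ (g : ℝ → ℂ) (Cg : NNReal), HolderWith Cg α g → ∀ a b : ℝ,
      ‖g a - g b‖ ≤ (Cg:ℝ) * |a - b| ^ (α:ℝ) := by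
    intro g Cg hg a b
    have h := hg.dist_le a b
    rwa [Complex.dist_eq, Real.dist_eq] at h
  have hbnd : ∀ (g : ℝ → ℂ) (Cg : NNReal), HolderWith Cg α g → ∀ k : ℕ,
      L ^ k * ‖g (u k) - g (v k)‖ ≤ ((Cg:ℝ) * |x| ^ (α:ℝ) * θ ^ (α:ℝ)) * ρ ^ k := by
    intro g Cg hg k
    have h1 : ‖g (u k) - g (v k)‖ ≤ (Cg:ℝ) * (θ⁻¹ ^ (k/m) * |x|) ^ (α:ℝ) := by
      refine le_trans (habs g Cg hg _ _) ?_
      refine mul_le_mul_of_nonneg_left ?_ (Cg.coe_nonneg)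
      exact Real.rpow_le_rpow (abs_nonneg _) (hDb k) (le_of_lt hαR)
    have h2 : ((θ⁻¹ ^ (k/m) * |x|) : ℝ) ^ (α:ℝ) ≤ (θ ^ (α:ℝ) * s ^ k) * |x| ^ (α:ℝ) := by
      rw [Real.mul_rpow (by positivity) (abs_nonneg _)]
      exact mul_le_mul_of_nonneg_right (hpow k) (Real.rpow_nonneg (abs_nonneg _) _)
    have h3 : ‖g (u k) - g (v k)‖ ≤ (Cg:ℝ) * ((θ ^ (α:ℝ) * s ^ k) * |x| ^ (α:ℝ)) :=
      le_trans h1 (mul_le_mul_of_nonneg_left h2 Cg.coe_nonneg)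
    calc L ^ k * ‖g (u k) - g (v k)‖
        ≤ L ^ k * ((Cg:ℝ) * ((θ ^ (α:ℝ) * s ^ k) * |x| ^ (α:ℝ))) :=
          mul_le_mul_of_nonneg_left h3 (pow_nonneg hlam0.le _)
      _ = ((Cg:ℝ) * |x| ^ (α:ℝ) * θ ^ (α:ℝ)) * ρ ^ k := by
          rw [hρ, mul_pow]; ring
  have hlamne : lam ≠ 0 := by
    intro h
    rw [hL, h] at hlam0
    simp at hlam0
  set a : ℕ → ℂ := fun n => lam ^ (n+1) * (fhat (u (n+1)) - fhat (v (n+1))) with ha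
  have hnorm : ∀ n, ‖a n‖ = L ^ (n+1) * ‖fhat (u (n+1)) - fhat (v (n+1))‖ := by
    intro n
    rw [ha]
    simp only [norm_mul, norm_pow, hL]
  have hsum : Summable a := by
    have hgeo : Summable (fun n : ℕ => ((((C:ℝ) * |x| ^ (α:ℝ) * θ ^ (α:ℝ)) * ρ) * ρ ^ n)) :=
      (summable_geometric_of_lt_one hρ0 hρ1).mul_left _
    apply Summable.of_norm
    refine hgeo.of_nonneg_of_le (fun n => norm_nonneg _) (fun n => ?_)
    rw [hnorm n]
    calc L ^ (n+1) * ‖fhat (u (n+1)) - fhat (v (n+1))‖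
        ≤ ((C:ℝ) * |x| ^ (α:ℝ) * θ ^ (α:ℝ)) * ρ ^ (n+1) := hbnd fhat C hfH (n+1)
      _ = (((C:ℝ) * |x| ^ (α:ℝ) * θ ^ (α:ℝ)) * ρ) * ρ ^ n := by ring
  have hper : ∀ (k : ℕ) (y : ℝ), phihat (y + k) = phihat y := by
    intro k
    induction k with
    | zero => simp
    | succ k ih =>
      intro y
      have h : (y + ((k:ℝ)+1)) = (y + k) + 1 := by ring
      push_cast
      rw [h, hphiper (y + k), ih]
  set g : ℕ → ℂ := fun n => lam ^ n * (phihat (u n) - phihat (v n)) with hg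
  have hterm : ∀ n, a n = g n - g (n+1) := by
    intro n
    rw [ha, hg]
    simp only
    rw [hcoh (u (n+1)), hcoh (v (n+1)), hTu n, hTv n, hper (j n) (u n), hper (j n) (v n)]
    field_simp
    ring
  have htend : Filter.Tendsto g Filter.atTop (nhds 0) := by
    rw [tendsto_zero_iff_norm_tendsto_zero]
    have hb0 : Filter.Tendsto (fun n : ℕ => ((Cphi:ℝ) * |x| ^ (α:ℝ) * θ ^ (α:ℝ)) * ρ ^ n)
        Filter.atTop (nhds 0) := by
      have h := (tendsto_pow_atTop_nhds_zero_of_lt_one hρ0 hρ1).const_mul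
        ((Cphi:ℝ) * |x| ^ (α:ℝ) * θ ^ (α:ℝ))
      simpa using h
    refine squeeze_zero (fun n => norm_nonneg _) (fun n => ?_) hb0
    rw [hg]
    simp only [norm_mul, norm_pow]
    exact hbnd phihat Cphi hphiH n
  have h2 := hsum.hasSum.tendsto_sum_nat
  have h1 : Filter.Tendsto (fun N => ∑ n ∈ Finset.range N, a n) Filter.atTop (nhds (g 0)) := by
    have hts : ∀ N, ∑ n ∈ Finset.range N, a n = g 0 - g N := by
      intro N
      rw [Finset.sum_congr rfl (fun n _ => hterm n)]
      exact Finset.sum_range_sub' g N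
    simp only [hts]
    simpa using tendsto_const_nhds.sub htend
  have h3 : ∑' n, a n = g 0 := tendsto_nhds_unique h2 h1
  have h4 : hFun tau fhat lam j x = ∑' n, a n := rfl
  rw [h4, h3, hg]
  simp only [pow_zero, one_mul]
  rw [hu0, hv0]
end

section
/- (Sub-action telescoping/holonomy inequality) Let T be a C¹ expanding circle map with T(0)=0, not orientation-reversing, f : ℝ/ℤ → ℝ continuous, and g a sub-action: f ≤ g∘T − g + β(f) pointwise, where β(f) = sup over T-invariant measures of ∫f dμ. Let S be a compact T-invariant subset of (0,1) on which equality f = g∘T − g + β(f) holds along all backward orbits considered. Suppose the digit sequence i ∈ Σ_d and x ∈ S satisfy τ_{i,n}(x) ∈ S for all n ≥ 1 (so (i,x) ∈ 𝒮), and h_i(x) = Σ_{n≥1}(f̂∘τ_{i,n}(x) − f̂∘τ_{i,n}(0)) converges. Then for any y ∈ S: g(y) − g(x) ≥ h_i(y) − h_i(x), with equality if also τ_{i,n}(y) ∈ S for all n ≥ 1. -/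
open MeasureTheory

/-- `β(T,f) = sup { ∫ f dμ : μ a T-invariant Borel probability measure }`. -/
noncomputable def betaMax (T : AddCircle (1 : ℝ) → AddCircle (1 : ℝ))
    (f : AddCircle (1 : ℝ) → ℝ) : ℝ :=
  sSup {r : ℝ | ∃ μ : Measure (AddCircle (1 : ℝ)), IsProbabilityMeasure μ ∧
    Measure.map T μ = μ ∧ r = ∫ y, f y ∂μ}

/-- **Sub-action telescoping / holonomy inequality.**
`T` is a `C¹` expanding, not orientation-reversing, circle map of degree `d` fixing `0`
(lift `T̂`, `τ = T̂⁻¹`), `f` continuous, `g` a sub-action (`f ≤ g∘T − g + β(f)`), `S` a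
compact `T`-invariant subset of `(0,1)` on which equality holds. If `(i,x) ∈ 𝒮`
(i.e. `x ∈ S` and `τ_{i,n}(x) ∈ S` for all `n ≥ 1`) and the series defining `h_i`
converges, then for every `y ∈ S`: `g(y) − g(x) ≥ h_i(y) − h_i(x)`, with equality if
moreover `τ_{i,n}(y) ∈ S` for all `n ≥ 1`. -/
theorem stmt_14 (d : ℕ) (hd : 2 ≤ d)
    (T : AddCircle (1 : ℝ) → AddCircle (1 : ℝ)) (hTcont : Continuous T)
    (That : ℝ → ℝ) (hlift : ∀ x : ℝ, ((That x : ℝ) : AddCircle (1 : ℝ)) = T (x : ℝ))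
    (hTC1 : ContDiff ℝ 1 That) (hT0 : That 0 = 0)
    (hTdeg : ∀ x, That (x + 1) = That x + d)
    (hTexp : ∀ x, 1 < deriv That x)
    (tau : ℝ → ℝ) (htau1 : ∀ x, That (tau x) = x) (htau2 : ∀ x, tau (That x) = x)
    (f : AddCircle (1 : ℝ) → ℝ) (hf : Continuous f)
    (g : AddCircle (1 : ℝ) → ℝ) (hg : Continuous g)
    (hsub : ∀ y, f y ≤ g (T y) - g y + betaMax T f)
    (S : Set ℝ) (hScomp : IsCompact S) (hS01 : S ⊆ Set.Ioo 0 1)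
    (hSinv : T '' ((fun x : ℝ => (x : AddCircle (1 : ℝ))) '' S)
      = (fun x : ℝ => (x : AddCircle (1 : ℝ))) '' S)
    (heq : ∀ x ∈ S, f (x : ℝ) = g (T (x : ℝ)) - g (x : ℝ) + betaMax T f)
    (i : ℕ → Fin d) (x : ℝ) (hxS : x ∈ S)
    (hback : ∀ n : ℕ, 1 ≤ n → tauIt tau (fun m => (i m : ℕ)) n x ∈ S)
    (hsum : ∀ z : ℝ, Summable (fun n : ℕ =>
      f ((tauIt tau (fun m => (i m : ℕ)) (n + 1) z : ℝ) : AddCircle (1 : ℝ))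
        - f ((tauIt tau (fun m => (i m : ℕ)) (n + 1) 0 : ℝ) : AddCircle (1 : ℝ)))) :
    ∀ y ∈ S,
      (g ((y : ℝ) : AddCircle (1 : ℝ)) - g ((x : ℝ) : AddCircle (1 : ℝ)) ≥
        (∑' n : ℕ, (f ((tauIt tau (fun m => (i m : ℕ)) (n + 1) y : ℝ) : AddCircle (1 : ℝ))
            - f ((tauIt tau (fun m => (i m : ℕ)) (n + 1) 0 : ℝ) : AddCircle (1 : ℝ))))
        - (∑' n : ℕ, (f ((tauIt tau (fun m => (i m : ℕ)) (n + 1) x : ℝ) : AddCircle (1 : ℝ))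
            - f ((tauIt tau (fun m => (i m : ℕ)) (n + 1) 0 : ℝ) : AddCircle (1 : ℝ))))) ∧
      ((∀ n : ℕ, 1 ≤ n → tauIt tau (fun m => (i m : ℕ)) n y ∈ S) →
        g ((y : ℝ) : AddCircle (1 : ℝ)) - g ((x : ℝ) : AddCircle (1 : ℝ)) =
        (∑' n : ℕ, (f ((tauIt tau (fun m => (i m : ℕ)) (n + 1) y : ℝ) : AddCircle (1 : ℝ))
            - f ((tauIt tau (fun m => (i m : ℕ)) (n + 1) 0 : ℝ) : AddCircle (1 : ℝ))))
        - (∑' n : ℕ, (f ((tauIt tau (fun m => (i m : ℕ)) (n + 1) x : ℝ) : AddCircle (1 : ℝ))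
            - f ((tauIt tau (fun m => (i m : ℕ)) (n + 1) 0 : ℝ) : AddCircle (1 : ℝ))))) := by
  intro y hyS
  set w : ℕ → ℝ → ℝ := tauIt tau (fun m => (i m : ℕ)) with hw
  set β : ℝ := betaMax T f with hβ
  -- basic facts about That and tau
  have hmono : StrictMono That := strictMono_of_deriv_pos fun z => zero_lt_one.trans (hTexp z)
  have htaumono : Monotone tau := fun a b hab => by
    have : That (tau a) ≤ That (tau b) := by rw [htau1, htau1]; exact hab
    exact hmono.le_iff_le.mp this
  have htaustrict : StrictMono tau := fun a b hab => by
    have : That (tau a) < That (tau b) := by rw [htau1, htau1]; exact hab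
    exact hmono.lt_iff_lt.mp this
  have htau0 : tau 0 = 0 := by have := htau2 0; rwa [hT0] at this
  have hThat1 : That 1 = d := by have h := hTdeg 0; rwa [zero_add, hT0, zero_add] at h
  have htaud : tau d = 1 := by rw [← hThat1, htau2]
  have htauIcc : ∀ t ∈ Set.Icc (0:ℝ) (d:ℝ), tau t ∈ Set.Icc (0:ℝ) 1 := by
    intro t ht
    exact ⟨by rw [← htau0]; exact htaumono ht.1, by rw [← htaud]; exact htaumono ht.2⟩
  have hper : ∀ (a : ℝ) (k : ℕ), ((a + (k:ℝ) : ℝ) : AddCircle (1:ℝ)) = (a : AddCircle (1:ℝ)) := by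
    intro a k
    induction k with
    | zero => simp
    | succ k ih =>
      have h : (a + ((k:ℝ)+1) : ℝ) = (a + k) + 1 := by ring
      push_cast
      rw [h, AddCircle.coe_add_period]
      exact ih
  have hwsucc : ∀ (z : ℝ) (n : ℕ), w (n+1) z = tau (w n z + ((i n : ℕ) : ℝ)) := by
    intro z n; rw [hw]; rfl
  have hw0 : ∀ z : ℝ, w 0 z = z := by intro z; rw [hw]; rfl
  have hTw : ∀ (z : ℝ) (n : ℕ),
      T ((w (n+1) z : ℝ) : AddCircle (1:ℝ)) = ((w n z : ℝ) : AddCircle (1:ℝ)) := by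
    intro z n
    rw [← hlift (w (n+1) z), hwsucc, htau1]
    exact hper (w n z) (i n)
  -- telescoping
  have key_le : ∀ (z : ℝ) (N : ℕ),
      (∑ n ∈ Finset.range N, f ((w (n+1) z : ℝ) : AddCircle (1:ℝ)))
        ≤ g ((z : ℝ) : AddCircle (1:ℝ)) - g ((w N z : ℝ) : AddCircle (1:ℝ)) + N * β := by
    intro z N
    induction N with
    | zero => simp [hw0]
    | succ N ih =>
      rw [Finset.sum_range_succ]
      have h2 := hsub ((w (N+1) z : ℝ) : AddCircle (1:ℝ))
      rw [hTw z N] at h2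
      push_cast
      push_cast at ih
      linarith
  have key_eq : ∀ (z : ℝ), (∀ n : ℕ, 1 ≤ n → w n z ∈ S) → ∀ N : ℕ,
      (∑ n ∈ Finset.range N, f ((w (n+1) z : ℝ) : AddCircle (1:ℝ)))
        = g ((z : ℝ) : AddCircle (1:ℝ)) - g ((w N z : ℝ) : AddCircle (1:ℝ)) + N * β := by
    intro z hz N
    induction N with
    | zero => simp [hw0]
    | succ N ih =>
      rw [Finset.sum_range_succ]
      have h2 := heq (w (N+1) z) (hz (N+1) (Nat.le_add_left 1 N))
      rw [hTw z N] at h2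
      push_cast
      push_cast at ih
      linarith
  -- membership in [0,1]
  have hxI : x ∈ Set.Icc (0:ℝ) 1 := Set.Ioo_subset_Icc_self (hS01 hxS)
  have hyI : y ∈ Set.Icc (0:ℝ) 1 := Set.Ioo_subset_Icc_self (hS01 hyS)
  have hargIcc : ∀ z ∈ Set.Icc (0:ℝ) 1, ∀ n : ℕ,
      (z + ((i n : ℕ) : ℝ)) ∈ Set.Icc (0:ℝ) (d:ℝ) := by
    intro z hz n
    have hlt : ((i n : ℕ) : ℝ) + 1 ≤ (d:ℝ) := by exact_mod_cast Nat.succ_le_of_lt (i n).isLt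
    constructor
    · have : (0:ℝ) ≤ ((i n : ℕ) : ℝ) := Nat.cast_nonneg _
      linarith [hz.1]
    · linarith [hz.2]
  have hwIcc : ∀ z ∈ Set.Icc (0:ℝ) 1, ∀ n : ℕ, w n z ∈ Set.Icc (0:ℝ) 1 := by
    intro z hz n
    induction n with
    | zero => rw [hw0]; exact hz
    | succ n ih =>
      rw [hwsucc]
      exact htauIcc _ (hargIcc _ ih n)
  -- contraction
  obtain ⟨c₀, hc₀, hmin⟩ := isCompact_Icc.exists_isMinOn (Set.nonempty_Icc.mpr zero_le_one)
    ((hTC1.continuous_deriv le_rfl).continuousOn (s := Set.Icc (0:ℝ) 1))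
  set lam : ℝ := deriv That c₀ with hlamdef
  have hlam1 : 1 < lam := hTexp c₀
  have hlam0 : 0 < lam := zero_lt_one.trans hlam1
  have hcontr : ∀ a b : ℝ, a ∈ Set.Icc (0:ℝ) (d:ℝ) → b ∈ Set.Icc (0:ℝ) (d:ℝ) →
      |tau a - tau b| ≤ |a - b| / lam := by
    have main : ∀ a b : ℝ, a ∈ Set.Icc (0:ℝ) (d:ℝ) → b ∈ Set.Icc (0:ℝ) (d:ℝ) → b ≤ a →
        tau a - tau b ≤ (a - b) / lam := by
      intro a b ha hb hba
      rcases eq_or_lt_of_le hba with rfl | hba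
      · simp
      · have htb : tau b < tau a := htaustrict hba
        obtain ⟨c, hc, hceq⟩ := exists_deriv_eq_slope That htb
          (hTC1.continuous.continuousOn) ((hTC1.differentiable one_ne_zero).differentiableOn)
        rw [htau1, htau1] at hceq
        have hcI : c ∈ Set.Icc (0:ℝ) 1 := by
          constructor
          · have : (0:ℝ) ≤ tau b := by rw [← htau0]; exact htaumono hb.1
            linarith [hc.1]
          · have : tau a ≤ 1 := by rw [← htaud]; exact htaumono ha.2
            linarith [hc.2]
        have hlamle : lam ≤ (a - b) / (tau a - tau b) := by
          rw [← hceq]; exact hmin hcI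
        have hpos : 0 < tau a - tau b := sub_pos.mpr htb
        have h1 : lam * (tau a - tau b) ≤ a - b := (le_div_iff₀ hpos).mp hlamle
        rw [le_div_iff₀ hlam0]
        linarith [mul_comm (tau a - tau b) lam]
    intro a b ha hb
    rcases le_total b a with h | h
    · rw [abs_of_nonneg (sub_nonneg.mpr (htaumono h)), abs_of_nonneg (sub_nonneg.mpr h)]
      exact main a b ha hb h
    · rw [abs_of_nonpos (sub_nonpos.mpr (htaumono h)), abs_of_nonpos (sub_nonpos.mpr h),
        neg_sub, neg_sub]
      exact main b a hb ha h
  have hdist : ∀ n : ℕ, |w n y - w n x| ≤ |y - x| / lam ^ n := by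
    intro n
    induction n with
    | zero => simp [hw0]
    | succ n ih =>
      rw [hwsucc, hwsucc]
      have h2 := hcontr (w n y + ((i n : ℕ) : ℝ)) (w n x + ((i n : ℕ) : ℝ))
        (hargIcc _ (hwIcc y hyI n) n) (hargIcc _ (hwIcc x hxI n) n)
      rw [add_sub_add_right_eq_sub] at h2
      calc |tau (w n y + ((i n : ℕ) : ℝ)) - tau (w n x + ((i n : ℕ) : ℝ))|
          ≤ |w n y - w n x| / lam := h2
        _ ≤ (|y - x| / lam ^ n) / lam := by gcongr
        _ = |y - x| / lam ^ (n+1) := by rw [div_div, ← pow_succ]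
  -- G (w N y) - G (w N x) → 0
  have habs0 : Filter.Tendsto (fun N : ℕ => |w N y - w N x|) Filter.atTop (nhds 0) := by
    apply squeeze_zero (fun n => abs_nonneg _) hdist
    have h1 : Filter.Tendsto (fun N : ℕ => (lam⁻¹) ^ N) Filter.atTop (nhds 0) :=
      tendsto_pow_atTop_nhds_zero_of_lt_one (by positivity) (inv_lt_one_of_one_lt₀ hlam1)
    have h2 := h1.const_mul |y - x|
    simpa [div_eq_mul_inv, inv_pow] using h2
  have hlip : LipschitzWith 1 (fun r : ℝ => (r : AddCircle (1:ℝ))) := by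
    apply LipschitzWith.of_dist_le_mul
    intro a b
    rw [dist_eq_norm]
    have h : (a : AddCircle (1:ℝ)) - b = ((a - b : ℝ) : AddCircle (1:ℝ)) := by norm_cast
    rw [h]
    simpa [Real.norm_eq_abs, Real.dist_eq] using (QuotientAddGroup.norm_mk_le_norm (m := a - b) : ‖((a - b : ℝ) : AddCircle (1:ℝ))‖ ≤ ‖a - b‖)
  have hGuc : UniformContinuous (fun r : ℝ => g (r : AddCircle (1:ℝ))) :=
    (CompactSpace.uniformContinuous_of_continuous hg).comp hlip.uniformContinuous
  have hU1 : Filter.Tendsto (fun N : ℕ => (w N y, w N x)) Filter.atTop (uniformity ℝ) := by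
    rw [tendsto_uniformity_iff_dist_tendsto_zero]
    simpa [Real.dist_eq] using habs0
  have hU2 : Filter.Tendsto
      (fun N : ℕ => (g ((w N y : ℝ) : AddCircle (1:ℝ)), g ((w N x : ℝ) : AddCircle (1:ℝ))))
      Filter.atTop (uniformity ℝ) := Filter.Tendsto.comp hGuc hU1
  have hGtend : Filter.Tendsto
      (fun N : ℕ => g ((w N y : ℝ) : AddCircle (1:ℝ)) - g ((w N x : ℝ) : AddCircle (1:ℝ)))
      Filter.atTop (nhds 0) := by
    have h3 := tendsto_uniformity_iff_dist_tendsto_zero.mp hU2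
    rw [tendsto_zero_iff_abs_tendsto_zero]
    simpa [Real.dist_eq, Function.comp_def] using h3
  -- sum limits
  have hsy := (hsum y).hasSum.tendsto_sum_nat
  have hsx := (hsum x).hasSum.tendsto_sum_nat
  have hD : ∀ (z : ℝ) (N : ℕ),
      (∑ n ∈ Finset.range N, (f ((w (n+1) z : ℝ) : AddCircle (1:ℝ))
          - f ((w (n+1) 0 : ℝ) : AddCircle (1:ℝ))))
        = (∑ n ∈ Finset.range N, f ((w (n+1) z : ℝ) : AddCircle (1:ℝ)))
          - (∑ n ∈ Finset.range N, f ((w (n+1) 0 : ℝ) : AddCircle (1:ℝ))) :=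
    fun z N => Finset.sum_sub_distrib _ _
  have hLlim : Filter.Tendsto (fun N : ℕ =>
      ((∑ n ∈ Finset.range N, (f ((w (n+1) y : ℝ) : AddCircle (1:ℝ))
          - f ((w (n+1) 0 : ℝ) : AddCircle (1:ℝ))))
        - (∑ n ∈ Finset.range N, (f ((w (n+1) x : ℝ) : AddCircle (1:ℝ))
          - f ((w (n+1) 0 : ℝ) : AddCircle (1:ℝ)))))
        + (g ((w N y : ℝ) : AddCircle (1:ℝ)) - g ((w N x : ℝ) : AddCircle (1:ℝ))))
      Filter.atTop (nhds
        (((∑' n : ℕ, (f ((w (n+1) y : ℝ) : AddCircle (1:ℝ))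
            - f ((w (n+1) 0 : ℝ) : AddCircle (1:ℝ))))
          - (∑' n : ℕ, (f ((w (n+1) x : ℝ) : AddCircle (1:ℝ))
            - f ((w (n+1) 0 : ℝ) : AddCircle (1:ℝ))))) + 0)) :=
    (hsy.sub hsx).add hGtend
  constructor
  · have hle : ∀ N : ℕ,
        ((∑ n ∈ Finset.range N, (f ((w (n+1) y : ℝ) : AddCircle (1:ℝ))
            - f ((w (n+1) 0 : ℝ) : AddCircle (1:ℝ))))
          - (∑ n ∈ Finset.range N, (f ((w (n+1) x : ℝ) : AddCircle (1:ℝ))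
            - f ((w (n+1) 0 : ℝ) : AddCircle (1:ℝ)))))
          + (g ((w N y : ℝ) : AddCircle (1:ℝ)) - g ((w N x : ℝ) : AddCircle (1:ℝ)))
        ≤ g ((y : ℝ) : AddCircle (1:ℝ)) - g ((x : ℝ) : AddCircle (1:ℝ)) := by
      intro N
      have h1 := key_le y N
      have h2 := key_eq x hback N
      rw [hD y N, hD x N]
      linarith
    have hfin := le_of_tendsto hLlim (Filter.Eventually.of_forall hle)
    linarith
  · intro hbacky
    have heqN : ∀ N : ℕ,
        ((∑ n ∈ Finset.range N, (f ((w (n+1) y : ℝ) : AddCircle (1:ℝ))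
            - f ((w (n+1) 0 : ℝ) : AddCircle (1:ℝ))))
          - (∑ n ∈ Finset.range N, (f ((w (n+1) x : ℝ) : AddCircle (1:ℝ))
            - f ((w (n+1) 0 : ℝ) : AddCircle (1:ℝ)))))
          + (g ((w N y : ℝ) : AddCircle (1:ℝ)) - g ((w N x : ℝ) : AddCircle (1:ℝ)))
        = g ((y : ℝ) : AddCircle (1:ℝ)) - g ((x : ℝ) : AddCircle (1:ℝ)) := by
      intro N
      have h1 := key_eq y hbacky N
      have h2 := key_eq x hback N
      rw [hD y N, hD x N]
      linarith
    have hconst : Filter.Tendsto (fun N : ℕ =>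
        ((∑ n ∈ Finset.range N, (f ((w (n+1) y : ℝ) : AddCircle (1:ℝ))
            - f ((w (n+1) 0 : ℝ) : AddCircle (1:ℝ))))
          - (∑ n ∈ Finset.range N, (f ((w (n+1) x : ℝ) : AddCircle (1:ℝ))
            - f ((w (n+1) 0 : ℝ) : AddCircle (1:ℝ)))))
          + (g ((w N y : ℝ) : AddCircle (1:ℝ)) - g ((w N x : ℝ) : AddCircle (1:ℝ))))
        Filter.atTop (nhds (g ((y : ℝ) : AddCircle (1:ℝ)) - g ((x : ℝ) : AddCircle (1:ℝ)))) := by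
      have hfun : (fun N : ℕ =>
          ((∑ n ∈ Finset.range N, (f ((w (n+1) y : ℝ) : AddCircle (1:ℝ))
              - f ((w (n+1) 0 : ℝ) : AddCircle (1:ℝ))))
            - (∑ n ∈ Finset.range N, (f ((w (n+1) x : ℝ) : AddCircle (1:ℝ))
              - f ((w (n+1) 0 : ℝ) : AddCircle (1:ℝ)))))
            + (g ((w N y : ℝ) : AddCircle (1:ℝ)) - g ((w N x : ℝ) : AddCircle (1:ℝ))))
          = fun _ => g ((y : ℝ) : AddCircle (1:ℝ)) - g ((x : ℝ) : AddCircle (1:ℝ)) :=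
        funext heqN
      rw [hfun]
      exact tendsto_const_nhds
    have huniq := tendsto_nhds_unique hLlim hconst
    linarith
end
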